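/- The series ∑_{k=1}^∞ (-1)^{k-1} · 16 / ((2k-1)⁵ + 4·(2k-1)) converges to π. Equivalently, for every real D > 0, the circumference of a circle of diameter D equals 16D/(1⁵+4·1) − 16D/(3⁵+4·3) + 16D/(5⁵+4·5) − ⋯. -/

import Mathlib

open Filter Finset Real

private noncomputable def F4 : ℕ → ℝ :=
  fun k : ℕ => (-1 : ℝ) ^ k * 16 / ((2 * (k : ℝ) + 1) ^ 5 + 4 * (2 * (k : ℝ) + 1))

private lemma F4_summable : Summable F4 := by
  have hg : Summable (fun k : ℕ => 16 / ((k : ℝ) + 1) ^ 2) := by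
    have h0 : Summable (fun n : ℕ => 1 / (n : ℝ) ^ 2) :=
      Real.summable_one_div_nat_pow.mpr (by norm_num)
    have h1 := (summable_nat_add_iff 1).mpr h0
    have h2 := h1.mul_left 16
    refine h2.congr fun n => ?_
    push_cast
    ring
  refine Summable.of_norm_bounded hg fun k => ?_
  have hden : ((k : ℝ) + 1) ^ 2 ≤ (2 * (k : ℝ) + 1) ^ 5 + 4 * (2 * (k : ℝ) + 1) := by
    have hk : (0 : ℝ) ≤ (k : ℝ) := Nat.cast_nonneg k
    have h5 : (2 * (k:ℝ) + 1) ^ 2 ≤ (2 * (k:ℝ) + 1) ^ 5 :=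
      pow_le_pow_right₀ (by linarith) (by norm_num)
    nlinarith [sq_nonneg (k:ℝ)]
  have hpos : (0 : ℝ) < (2 * (k : ℝ) + 1) ^ 5 + 4 * (2 * (k : ℝ) + 1) := by positivity
  have : ‖F4 k‖ = 16 / ((2 * (k : ℝ) + 1) ^ 5 + 4 * (2 * (k : ℝ) + 1)) := by
    unfold F4
    rw [Real.norm_eq_abs, abs_div, abs_of_pos hpos, abs_mul, abs_pow, abs_neg, abs_one,
      one_pow, one_mul, abs_of_nonneg (by norm_num : (0:ℝ) ≤ 16)]
  rw [this]
  gcongr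

private lemma F4_partial (N : ℕ) :
    ∑ k ∈ Finset.range N, F4 k =
      4 * (∑ k ∈ Finset.range N, (-1 : ℝ) ^ k / (2 * k + 1))
        + 2 * (-1 : ℝ) ^ N * (2 * N / (4 * (N : ℝ) ^ 2 + 1)) := by
  induction N with
  | zero => simp
  | succ n ih =>
    rw [Finset.sum_range_succ, Finset.sum_range_succ, ih]
    have h1 : (0:ℝ) < 2 * (n:ℝ) + 1 := by positivity
    have h2 : (0:ℝ) < (2 * (n:ℝ) + 1) ^ 5 + 4 * (2 * (n:ℝ) + 1) := by positivity
    have h3 : (0:ℝ) < 4 * (n:ℝ) ^ 2 + 1 := by positivity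
    have h4 : (0:ℝ) < 4 * ((n:ℝ)+1) ^ 2 + 1 := by positivity
    unfold F4
    push_cast
    field_simp
    ring

private lemma F4_hasSum : HasSum F4 Real.pi := by
  have hsum := F4_summable
  have htend : Tendsto (fun N => ∑ k ∈ Finset.range N, F4 k) atTop (nhds Real.pi) := by
    have h1 : Tendsto (fun N => 4 * (∑ k ∈ Finset.range N, (-1 : ℝ) ^ k / (2 * k + 1)))
        atTop (nhds Real.pi) := by
      have h0 := Real.tendsto_sum_pi_div_four.const_mul (4:ℝ)
      rwa [show (4:ℝ) * (Real.pi / 4) = Real.pi by ring] at h0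
    have h2 : Tendsto (fun N : ℕ => 2 * (-1 : ℝ) ^ N * (2 * N / (4 * (N : ℝ) ^ 2 + 1)))
        atTop (nhds 0) := by
      refine squeeze_zero_norm (fun n => ?_) tendsto_one_div_atTop_nhds_zero_nat
      ·
        have h3 : (0:ℝ) < 4 * (n:ℝ) ^ 2 + 1 := by positivity
        rw [norm_mul, norm_mul, norm_pow, norm_neg, norm_one, one_pow, mul_one]
        rw [Real.norm_ofNat, Real.norm_eq_abs, abs_of_nonneg (by positivity)]
        rcases Nat.eq_zero_or_pos n with h | h
        · simp [h]
        · have hn : (1:ℝ) ≤ (n:ℝ) := by exact_mod_cast h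
          rw [← mul_div_assoc, div_le_div_iff₀ h3 (by linarith)]
          nlinarith
    have := h1.add h2
    rw [add_zero] at this
    exact this.congr fun N => (F4_partial N).symm
  have hh := hsum.hasSum
  have := tendsto_nhds_unique hh.tendsto_sum_nat htend
  rwa [this] at hh

theorem stmt_11 :
    HasSum (fun k : ℕ =>
        (-1 : ℝ) ^ k * 16 / ((2 * (k : ℝ) + 1) ^ 5 + 4 * (2 * (k : ℝ) + 1)))
      Real.pi ∧
    ∀ D : ℝ, 0 < D →
      HasSum (fun k : ℕ =>
          (-1 : ℝ) ^ k * (16 * D) / ((2 * (k : ℝ) + 1) ^ 5 + 4 * (2 * (k : ℝ) + 1)))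
        (Real.pi * D) := by
  refine ⟨F4_hasSum, fun D _ => ?_⟩
  have := F4_hasSum.mul_right D
  refine this.congr_fun fun k => ?_
  unfold F4
  ring
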